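/- Let q ≥ 1 be an integer and γ ∈ (0,1); set α_n := 1 − γ/n, Λ_q(n) := ∑_{i,j=1}^n α_n^{q|i−j|}, and K_{q,n} := n^{1+q/2} (1 − α_n²)^{q/2} / √( q! Λ_q(n) ). Then K_{q,n} converges as n → ∞ to K_q^{(γ)} := √( 2^{q−1} q² γ^{q+2} / ( q! (exp(−qγ) − 1 + qγ) ) ); moreover there exists a constant C = C(γ,q) > 0 such that |K_{q,n} − K_q^{(γ)}| ≤ C/n for all n ≥ 1. -/

import Mathlib

set_option maxHeartbeats 1000000

/-- The normalizing ratio `K_{q,n} = n^{1+q/2}(1−α_n²)^{q/2}/√(q! Λ_q(n))` with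
`α_n = 1 − γ/n` and `Λ_q(n) = ∑_{i,j=1}^n α_n^{q|i−j|}`. -/
noncomputable def Kqn (γ : ℝ) (q n : ℕ) : ℝ :=
  (n : ℝ) ^ (1 + (q : ℝ) / 2) * (1 - (1 - γ / (n : ℝ)) ^ 2) ^ ((q : ℝ) / 2) /
    Real.sqrt ((q.factorial : ℝ) *
      ∑ i ∈ Finset.Icc 1 n, ∑ j ∈ Finset.Icc 1 n, (1 - γ / (n : ℝ)) ^ (q * Nat.dist i j))

/-- The limiting normalizing constant
`K_q^{(γ)} = √(2^{q−1} q² γ^{q+2} / (q!(exp(−qγ) − 1 + qγ)))`. -/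
noncomputable def Kq (γ : ℝ) (q : ℕ) : ℝ :=
  Real.sqrt ((2 : ℝ) ^ (q - 1) * (q : ℝ) ^ 2 * γ ^ (q + 2) /
    ((q.factorial : ℝ) * (Real.exp (-((q : ℝ) * γ)) - 1 + (q : ℝ) * γ)))

private lemma geomIcc' (ρ : ℝ) : ∀ n : ℕ, (1 - ρ) * ∑ d ∈ Finset.Icc 1 n, ρ ^ d = ρ * (1 - ρ ^ n) := by
  intro n
  induction n with
  | zero => simp
  | succ n ih =>
    rw [Finset.sum_Icc_succ_top (by omega), mul_add, ih, pow_succ]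
    ring

private lemma reindex' (ρ : ℝ) (n : ℕ) :
    ∑ i ∈ Finset.Icc 1 n, ρ ^ (n + 1 - i) = ∑ d ∈ Finset.Icc 1 n, ρ ^ d := by
  apply Finset.sum_nbij' (fun i => n + 1 - i) (fun d => n + 1 - d)
  case hi => intros a ha; simp only [Finset.mem_Icc] at *; omega
  case hj => intros a ha; simp only [Finset.mem_Icc] at *; omega
  case left_neg => intros a ha; simp only [Finset.mem_Icc] at *; omega
  case right_neg => intros a ha; simp only [Finset.mem_Icc] at *; omega
  case h => intros a ha; rfl

private lemma closedForm (ρ : ℝ) (n : ℕ) :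
    (1 - ρ) ^ 2 * ∑ i ∈ Finset.Icc 1 n, ∑ j ∈ Finset.Icc 1 n, ρ ^ (Nat.dist i j)
      = n * (1 - ρ ^ 2) - 2 * ρ * (1 - ρ ^ n) := by
  induction n with
  | zero => simp
  | succ n ih =>
    have hsplit : Finset.Icc 1 (n + 1) = insert (n + 1) (Finset.Icc 1 n) := by
      ext x; simp only [Finset.mem_Icc, Finset.mem_insert]; omega
    have hmem : (n+1) ∉ Finset.Icc 1 n := by simp
    have hrow : ∀ i ∈ Finset.Icc 1 n, Nat.dist i (n+1) = n + 1 - i := by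
      intro i hi; simp only [Finset.mem_Icc] at hi
      exact Nat.dist_eq_sub_of_le (by omega)
    have hcol : ∀ j ∈ Finset.Icc 1 n, Nat.dist (n+1) j = n + 1 - j := by
      intro j hj; simp only [Finset.mem_Icc] at hj
      rw [Nat.dist_comm]; exact Nat.dist_eq_sub_of_le (by omega)
    rw [hsplit, Finset.sum_insert hmem]
    have h1 : ∑ j ∈ insert (n+1) (Finset.Icc 1 n), ρ ^ Nat.dist (n+1) j
        = 1 + ∑ d ∈ Finset.Icc 1 n, ρ ^ d := by
      rw [Finset.sum_insert hmem, Nat.dist_self]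
      rw [Finset.sum_congr rfl (fun j hj => by rw [hcol j hj]), reindex']
      simp
    have h2 : ∑ i ∈ Finset.Icc 1 n, ∑ j ∈ insert (n+1) (Finset.Icc 1 n), ρ ^ Nat.dist i j
        = (∑ d ∈ Finset.Icc 1 n, ρ ^ d)
          + ∑ i ∈ Finset.Icc 1 n, ∑ j ∈ Finset.Icc 1 n, ρ ^ Nat.dist i j := by
      rw [Finset.sum_congr rfl (fun i hi => Finset.sum_insert hmem)]
      rw [Finset.sum_add_distrib]
      rw [Finset.sum_congr rfl (fun i hi => by rw [hrow i hi]), reindex']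
    rw [h1, h2]
    have hg := geomIcc' ρ n
    push_cast
    linear_combination ih + 2*(1-ρ)*hg

private lemma bern (x : ℝ) (hx0 : 0 ≤ x) (hx1 : x ≤ 1) (q : ℕ) :
    1 - q*x ≤ (1-x)^q ∧ (1-x)^q ≤ 1 - q*x + q^2/2*x^2 := by
  induction q with
  | zero => norm_num
  | succ q ih =>
    obtain ⟨h1, h2⟩ := ih
    have hp0 : (0:ℝ) ≤ (1-x)^q := pow_nonneg (by linarith) q
    have hp1 : (1-x)^q ≤ 1 := pow_le_one₀ (by linarith) (by linarith)
    have hq0 : (0:ℝ) ≤ (q:ℝ) := Nat.cast_nonneg q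
    constructor
    · rw [pow_succ]
      push_cast
      nlinarith [mul_nonneg hx0 hx0, mul_nonneg (mul_nonneg hq0 hx0) hx0]
    · rw [pow_succ]
      push_cast
      nlinarith [mul_nonneg hx0 hx0, mul_nonneg (mul_nonneg hq0 hx0) hx0,
        mul_nonneg (mul_nonneg (mul_nonneg hq0 hq0) hx0) (mul_nonneg hx0 hx0),
        mul_nonneg (mul_nonneg hq0 hx0) (mul_nonneg hx0 hx0)]

private lemma powLip (a b : ℝ) (ha : 0 ≤ a) (hab : a ≤ b) (hb : b ≤ 2) (q : ℕ) :
    b^q - a^q ≤ q * 2^q * (b - a) := by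
  induction q with
  | zero => norm_num
  | succ q ih =>
    have hpa : (0:ℝ) ≤ a^q := pow_nonneg ha q
    have hpb : a^q ≤ b^q := pow_le_pow_left₀ ha hab q
    have hbb : b^q ≤ 2^q := pow_le_pow_left₀ (le_trans ha hab) hb q
    have h2q : (0:ℝ) < 2^q := by positivity
    have hq0 : (0:ℝ) ≤ (q:ℝ) := Nat.cast_nonneg q
    rw [pow_succ, pow_succ, pow_succ]
    push_cast
    nlinarith [mul_le_mul_of_nonneg_left ih (le_trans ha (le_trans hab hb))]

private lemma sqrtDiff (x y : ℝ) (hx : 0 ≤ x) (hy : 0 < y) :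
    |Real.sqrt x - Real.sqrt y| ≤ |x - y| / Real.sqrt y := by
  have hsx : Real.sqrt x ^ 2 = x := Real.sq_sqrt hx
  have hsy : Real.sqrt y ^ 2 = y := Real.sq_sqrt hy.le
  have hsy0 : 0 < Real.sqrt y := Real.sqrt_pos.2 hy
  have hsx0 : 0 ≤ Real.sqrt x := Real.sqrt_nonneg x
  rw [le_div_iff₀ hsy0]
  rcases le_total (Real.sqrt x) (Real.sqrt y) with h | h
  · rw [abs_of_nonpos (by linarith), abs_of_nonpos (by nlinarith)]
    nlinarith
  · rw [abs_of_nonneg (by linarith), abs_of_nonneg (by nlinarith)]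
    nlinarith

private lemma expLB (x : ℝ) (hx0 : 0 ≤ x) (hx1 : x < 1) :
    Real.exp (-(x/(1-x))) ≤ 1 - x := by
  have h1 : 0 < 1 - x := by linarith
  have h := Real.add_one_le_exp (x/(1-x))
  have he : 0 < Real.exp (x/(1-x)) := Real.exp_pos _
  have key : (1-x) * Real.exp (x/(1-x)) ≥ 1 := by
    have : (1-x) * (x/(1-x) + 1) = 1 := by field_simp; ring
    nlinarith
  rw [Real.exp_neg]
  rw [inv_le_iff_one_le_mul₀ he]
  linarith [key]

private lemma expUB (x : ℝ) : 1 - x ≤ Real.exp (-x) := by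
  have := Real.add_one_le_exp (-x); linarith

private lemma Epos (t : ℝ) (ht : 0 < t) : 0 < Real.exp (-t) - 1 + t := by
  have := Real.add_one_lt_exp (x := -t) (by linarith)
  nlinarith [Real.exp_pos (-t)]

private lemma Kqn_eq_sqrt (q : ℕ) (hq : 1 ≤ q) (γ : ℝ) (hγ0 : 0 < γ) (hγ1 : γ < 1)
    (n : ℕ) (hn : 1 ≤ n) :
    Kqn γ q n = Real.sqrt (γ^q * ((2 - γ/(n:ℝ))^q * ((n:ℝ)*(1 - (1-γ/(n:ℝ))^q))^2) /
      ((q.factorial : ℝ) * ((n:ℝ)*(1 - ((1-γ/(n:ℝ))^q)^2)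
        - 2*(1-γ/(n:ℝ))^q*(1 - ((1-γ/(n:ℝ))^q)^n)))) := by
  have hn0 : (0:ℝ) < n := by exact_mod_cast hn
  have hx0 : 0 < γ / (n:ℝ) := div_pos hγ0 hn0
  have hx1 : γ / (n:ℝ) < 1 := by
    rw [div_lt_one hn0]; have h1n : (1:ℝ) ≤ (n:ℝ) := by exact_mod_cast hn
    linarith
  set x : ℝ := γ / (n:ℝ) with hxdef
  have ha0 : 0 < 1 - x := by linarith
  have ha1 : 1 - x < 1 := by linarith
  set ρ : ℝ := (1 - x)^q with hρdef
  have hρ0 : 0 < ρ := pow_pos ha0 q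
  have hρ1 : ρ < 1 := pow_lt_one₀ ha0.le ha1 (by omega)
  -- the sum
  set S : ℝ := ∑ i ∈ Finset.Icc 1 n, ∑ j ∈ Finset.Icc 1 n, ρ ^ (Nat.dist i j) with hSdef
  have hS0 : 0 < S := by
    apply Finset.sum_pos
    · intro i _
      apply Finset.sum_pos
      · intro j _; exact pow_pos hρ0 _
      · exact Finset.nonempty_Icc.2 hn
    · exact Finset.nonempty_Icc.2 hn
  have hSsum : (q.factorial : ℝ) *
      ∑ i ∈ Finset.Icc 1 n, ∑ j ∈ Finset.Icc 1 n, (1 - γ / (n:ℝ)) ^ (q * Nat.dist i j)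
      = (q.factorial : ℝ) * S := by
    rw [hSdef]; congr 1
    refine Finset.sum_congr rfl fun i _ => Finset.sum_congr rfl fun j _ => ?_
    rw [pow_mul]
  have hc0 : (0:ℝ) ≤ 1 - (1-x)^2 := by nlinarith
  -- rewrite the rpow parts as sqrt
  have h1 : (n:ℝ) ^ (1 + (q : ℝ) / 2) = Real.sqrt ((n:ℝ)^(q+2)) := by
    rw [Real.sqrt_eq_rpow, ← Real.rpow_natCast (n:ℝ) (q+2), ← Real.rpow_mul hn0.le]
    congr 1
    push_cast; ring
  have h2 : (1 - (1-x)^2) ^ ((q : ℝ) / 2) = Real.sqrt ((1 - (1-x)^2)^q) := by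
    rw [Real.sqrt_eq_rpow, ← Real.rpow_natCast (1 - (1-x)^2) q, ← Real.rpow_mul hc0]
    congr 1
    ring
  have hKqn : Kqn γ q n = Real.sqrt (((n:ℝ)^(q+2) * (1 - (1-x)^2)^q) / ((q.factorial : ℝ) * S)) := by
    rw [Kqn, hSsum, ← hxdef, h1, h2, ← Real.sqrt_mul (by positivity), ← Real.sqrt_div (by positivity)]
  rw [hKqn]
  congr 1
  -- now the algebraic identity
  have hD := closedForm ρ n
  have hfac : (0:ℝ) < q.factorial := by exact_mod_cast q.factorial_pos
  have hD0 : (0:ℝ) < (n:ℝ)*(1 - ρ^2) - 2*ρ*(1 - ρ^n) := by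
    rw [← hD]
    exact mul_pos (pow_pos (by linarith) 2) hS0
  rw [div_eq_div_iff (mul_pos hfac hS0).ne' (mul_pos hfac hD0).ne']
  rw [← hD]
  have hnc : (n:ℝ) * (1 - (1-x)^2) = γ * (2 - x) := by
    rw [hxdef]; field_simp; ring
  have key : (n:ℝ)^(q+2) * (1 - (1-x)^2)^q = (n:ℝ)^2 * (γ * (2-x))^q := by
    rw [pow_add, mul_comm ((n:ℝ)^q), mul_assoc, ← mul_pow, hnc]
  rw [key, mul_pow, mul_pow]
  ring

private lemma Kq_eq (q : ℕ) (hq : 1 ≤ q) (γ : ℝ) (hγ0 : 0 < γ) :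
    Kq γ q = Real.sqrt (γ^q * ((2:ℝ)^q * (q:ℝ)^2 * γ^2) /
      ((q.factorial : ℝ) * (2 * (Real.exp (-((q : ℝ) * γ)) - 1 + (q : ℝ) * γ)))) := by
  have hE : 0 < Real.exp (-((q:ℝ) * γ)) - 1 + (q:ℝ) * γ := by
    apply Epos; positivity
  have hfac : (0:ℝ) < q.factorial := by exact_mod_cast q.factorial_pos
  rw [Kq]
  congr 1
  have h2 : (2:ℝ)^q = 2 * 2^(q-1) := by
    conv_lhs => rw [← Nat.succ_pred_eq_of_pos hq]
    rw [pow_succ, Nat.pred_eq_sub_one]; ring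
  rw [h2, pow_add]
  field_simp

private lemma main_est (q : ℕ) (hq : 1 ≤ q) (γ : ℝ) (hγ0 : 0 < γ) (hγ1 : γ < 1) :
    ∃ C > (0:ℝ), ∃ N : ℕ, 1 ≤ N ∧ ∀ n : ℕ, N ≤ n → |Kqn γ q n - Kq γ q| ≤ C / n := by
  set Q : ℝ := (q:ℝ) with hQdef
  have hQ1 : (1:ℝ) ≤ Q := by rw [hQdef]; exact_mod_cast hq
  have hQ0 : (0:ℝ) < Q := by linarith
  set eγ : ℝ := Real.exp (-(Q * γ)) with heγdef
  set E : ℝ := eγ - 1 + Q * γ with hEdef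
  have hE : 0 < E := by rw [hEdef, heγdef]; exact Epos (Q*γ) (by positivity)
  have heγ0 : 0 < eγ := by rw [heγdef]; exact Real.exp_pos _
  have heγ1 : eγ ≤ 1 := by
    rw [heγdef]; exact Real.exp_le_one_iff.2 (neg_nonpos.2 (by positivity))
  have hfac : (0:ℝ) < q.factorial := by exact_mod_cast q.factorial_pos
  have h2q : (0:ℝ) < 2^q := by positivity
  -- constants
  set c₁ : ℝ := Q^2*γ^2/2 with hc₁
  set c₂ : ℝ := Q*γ^2/(1-γ) with hc₂
  set c₃ : ℝ := 2*c₁ + Q^2*γ^2 + 2*Q*γ + 2*c₂ with hc₃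
  set c₄ : ℝ := Q*2^q*γ*(Q*γ)^2 + 2^q*(2*(Q*γ))*c₁ with hc₄
  set c₅ : ℝ := 2*E*c₄ + 2^q*Q^2*γ^2*c₃ with hc₅
  have hc₁0 : 0 < c₁ := by rw [hc₁]; positivity
  have hc₂0 : 0 < c₂ := by rw [hc₂]; have : 0 < 1 - γ := by linarith
                           positivity
  have hc₃0 : 0 < c₃ := by rw [hc₃]; positivity
  have hc₄0 : 0 < c₄ := by rw [hc₄]; positivity
  have hc₅0 : 0 < c₅ := by rw [hc₅]; positivity
  set L : ℝ := γ^q * ((2:ℝ)^q * Q^2 * γ^2) / ((q.factorial : ℝ) * (2*E)) with hLdef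
  have hL0 : 0 < L := by rw [hLdef]; positivity
  have hsL : 0 < Real.sqrt L := Real.sqrt_pos.2 hL0
  set C₅ : ℝ := γ^q * c₅ / ((q.factorial : ℝ) * E * (2*E)) with hC₅
  have hC₅0 : 0 < C₅ := by rw [hC₅]; positivity
  clear_value Q eγ E c₁ c₂ c₃ c₄ c₅ L C₅
  refine ⟨C₅ / Real.sqrt L, by positivity, ⌈c₃/E⌉₊ + 1, le_add_self, ?_⟩
  intro n hn
  have hn1 : 1 ≤ n := le_trans le_add_self hn
  have hn0 : (0:ℝ) < n := by exact_mod_cast hn1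
  have hn1R : (1:ℝ) ≤ n := by exact_mod_cast hn1
  have hnc₃ : c₃ / (n:ℝ) ≤ E := by
    rw [div_le_iff₀ hn0]
    have h1 : c₃/E ≤ ⌈c₃/E⌉₊ := Nat.le_ceil _
    have h2 : ((⌈c₃/E⌉₊ + 1 : ℕ):ℝ) ≤ n := by exact_mod_cast hn
    push_cast at h2
    have : c₃/E ≤ (n:ℝ) := by linarith
    rw [div_le_iff₀ hE] at this
    linarith
  -- basic quantities
  set x : ℝ := γ / (n:ℝ) with hxdef
  have hx0 : 0 < x := by rw [hxdef]; positivity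
  have hxγ : x ≤ γ := by
    rw [hxdef, div_le_iff₀ hn0]
    calc γ = γ*1 := by ring
    _ ≤ γ*(n:ℝ) := mul_le_mul_of_nonneg_left hn1R hγ0.le
  have hx1 : x < 1 := lt_of_le_of_lt hxγ hγ1
  have hnx : (n:ℝ) * x = γ := by rw [hxdef]; field_simp
  have hnx2 : (n:ℝ) * x^2 = γ * x := by rw [pow_two, ← mul_assoc, hnx]
  set ρ : ℝ := (1-x)^q with hρdef
  have hρ0 : 0 < ρ := by rw [hρdef]; exact pow_pos (by linarith) q
  have hρ1 : ρ < 1 := by rw [hρdef]; exact pow_lt_one₀ (by linarith) (by linarith) (by omega)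
  set P : ℝ := ρ^n with hPdef
  have hP0 : 0 < P := by rw [hPdef]; exact pow_pos hρ0 n
  have hP1 : P ≤ 1 := by rw [hPdef]; exact pow_le_one₀ hρ0.le hρ1.le
  set u : ℝ := (n:ℝ) * (1 - ρ) with hudef
  set w : ℝ := 2 - x with hwdef
  set D : ℝ := (n:ℝ)*(1 - ρ^2) - 2*ρ*(1-P) with hDdef
  set F : ℝ := γ^q * (w^q * u^2) / ((q.factorial : ℝ) * D) with hFdef
  clear_value x ρ P u w D F
  -- Bernoulli bounds
  have hbern := bern x hx0.le hx1.le q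
  rw [← hρdef, ← hQdef] at hbern
  have h1ρu : 1 - ρ ≤ Q*x := by linarith [hbern.1]
  have h1ρl : Q*x - Q^2/2*x^2 ≤ 1 - ρ := by linarith [hbern.2]
  have h1ρ0 : 0 ≤ 1 - ρ := by linarith
  have hQxn : Q*x ≤ Q*γ/(n:ℝ) := by
    exact le_of_eq (by rw [hxdef]; ring)
  have hu_ub : u ≤ Q*γ := by
    rw [hudef]
    calc (n:ℝ)*(1-ρ) ≤ (n:ℝ)*(Q*x) := by
          exact mul_le_mul_of_nonneg_left h1ρu hn0.le
    _ = Q*γ := by rw [← hnx]; ring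
  have hu_lb : Q*γ - c₁/(n:ℝ) ≤ u := by
    rw [hudef]
    have : (n:ℝ)*(Q*x - Q^2/2*x^2) ≤ (n:ℝ)*(1-ρ) :=
      mul_le_mul_of_nonneg_left h1ρl hn0.le
    have hcalc : (n:ℝ)*(Q*x - Q^2/2*x^2) = Q*γ - Q^2/2*(γ*x) := by
      rw [mul_sub]
      rw [show (n:ℝ)*(Q*x) = Q*((n:ℝ)*x) by ring, hnx]
      rw [show (n:ℝ)*(Q^2/2*x^2) = Q^2/2*((n:ℝ)*x^2) by ring, hnx2]
    have hxn : x = γ/(n:ℝ) := hxdef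
    have : Q*γ - Q^2/2*(γ*(γ/(n:ℝ))) ≤ (n:ℝ)*(1-ρ) := by
      rw [← hxn]; rw [hcalc] at this
      have hmono : Q^2/2*(γ*x) ≤ Q^2/2*(γ*(γ/(n:ℝ))) := by
        rw [← hxn]
      linarith
    rw [hc₁]
    have : Q^2*γ^2/2/(n:ℝ) = Q^2/2*(γ*(γ/(n:ℝ))) := by ring
    linarith [this]
  have hu0 : 0 ≤ u := by rw [hudef]; positivity
  have h1ρn : 1 - ρ ≤ Q*γ/(n:ℝ) := le_trans h1ρu hQxn
  -- P bounds
  have hPu : P ≤ eγ := by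
    have h1 : (1-x) ≤ Real.exp (-x) := expUB x
    have h2 : (1-x)^n ≤ (Real.exp (-x))^n := pow_le_pow_left₀ (by linarith) h1 n
    have h3 : (Real.exp (-x))^n = Real.exp (-γ) := by
      rw [← Real.exp_nat_mul, ← hnx]; ring_nf
    have h4 : ((1-x)^n)^q ≤ (Real.exp (-γ))^q := by
      rw [← h3]; exact pow_le_pow_left₀ (pow_nonneg (by linarith) n) h2 q
    have h5 : (Real.exp (-γ))^q = eγ := by
      rw [heγdef, ← Real.exp_nat_mul, hQdef]; ring_nf
    have h6 : P = ((1-x)^n)^q := by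
      rw [hPdef, hρdef, ← pow_mul, ← pow_mul, Nat.mul_comm]
    rw [h6, ← h5]; exact h4
  have hPl : eγ - c₂/(n:ℝ) ≤ P := by
    have h1 : Real.exp (-(x/(1-x))) ≤ 1-x := expLB x hx0.le hx1
    have h2 : (Real.exp (-(x/(1-x))))^n ≤ (1-x)^n :=
      pow_le_pow_left₀ (by positivity) h1 n
    have h3 : (Real.exp (-(x/(1-x))))^n = Real.exp (-(γ/(1-x))) := by
      rw [← Real.exp_nat_mul]
      congr 1
      rw [show (n:ℝ) * -(x/(1-x)) = -(((n:ℝ)*x)/(1-x)) by ring, hnx]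
    have h4 : (Real.exp (-(γ/(1-x))))^q ≤ ((1-x)^n)^q := by
      rw [← h3]; exact pow_le_pow_left₀ (by positivity) h2 q
    have h5 : (Real.exp (-(γ/(1-x))))^q = Real.exp (-(Q*γ/(1-x))) := by
      rw [← Real.exp_nat_mul, hQdef]
      congr 1
      ring
    have h6 : P = ((1-x)^n)^q := by
      rw [hPdef, hρdef, ← pow_mul, ← pow_mul, Nat.mul_comm]
    have hsplit : Real.exp (-(Q*γ/(1-x))) = eγ * Real.exp (-(Q*γ*x/(1-x))) := by
      rw [heγdef, ← Real.exp_add]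
      congr 1
      have hne : (1:ℝ)-x ≠ 0 := by linarith
      field_simp [hne]
      ring
    have hB0 : 0 ≤ Q*γ*x/(1-x) := div_nonneg (by positivity) (by linarith)
    have hBle : Q*γ*x/(1-x) ≤ c₂/(n:ℝ) := by
      rw [hc₂, div_le_div_iff₀ (by linarith) hn0]
      have hcross : Q*γ*x*(n:ℝ) = Q*γ*γ := by
        rw [show Q*γ*x*(n:ℝ) = Q*γ*((n:ℝ)*x) by ring, hnx]
      rw [hcross]
      calc Q*γ*γ = Q*γ^2*((1-γ)/(1-γ)) := by
            rw [div_self (by linarith : (1:ℝ)-γ ≠ 0)]; ring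
      _ ≤ Q*γ^2*((1-x)/(1-γ)) := by
            exact mul_le_mul_of_nonneg_left
              ((div_le_div_iff_of_pos_right (by linarith)).mpr (by linarith)) (by positivity)
      _ = Q*γ^2/(1-γ)*(1-x) := by ring
    have hexpB : 1 - Q*γ*x/(1-x) ≤ Real.exp (-(Q*γ*x/(1-x))) := expUB _
    have : eγ * (1 - Q*γ*x/(1-x)) ≤ P := by
      rw [h6]
      calc eγ * (1 - Q*γ*x/(1-x)) ≤ eγ * Real.exp (-(Q*γ*x/(1-x))) := by
            exact mul_le_mul_of_nonneg_left hexpB heγ0.le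
      _ = Real.exp (-(Q*γ/(1-x))) := hsplit.symm
      _ = (Real.exp (-(γ/(1-x))))^q := h5.symm
      _ ≤ ((1-x)^n)^q := h4
    have hmul : eγ*(Q*γ*x/(1-x)) ≤ 1*(Q*γ*x/(1-x)) := mul_le_mul_of_nonneg_right heγ1 hB0
    have hexp2 : eγ*(1 - Q*γ*x/(1-x)) = eγ - eγ*(Q*γ*x/(1-x)) := by ring
    linarith
  have hPabs : |P - eγ| ≤ c₂/(n:ℝ) := abs_le.2 ⟨by linarith, by linarith⟩
  -- D bound
  have hid : D - 2*E = (u - Q*γ)*(1+ρ) - Q*γ*(1-ρ) + 2*(1-ρ)*(1-P) + 2*(P - eγ) := by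
    rw [hDdef, hEdef, hudef]; ring
  have hDE : |D - 2*E| ≤ c₃/(n:ℝ) := by
    have hPm := abs_le.1 hPabs
    have t1u : (u - Q*γ)*(1+ρ) ≤ 2*(c₁/(n:ℝ)) := by
      have e1 : (u - Q*γ)*(1+ρ) ≤ (c₁/(n:ℝ))*(1+ρ) :=
        mul_le_mul_of_nonneg_right (by linarith) (by linarith)
      have e2 : (c₁/(n:ℝ))*(1+ρ) ≤ (c₁/(n:ℝ))*2 :=
        mul_le_mul_of_nonneg_left (by linarith) (by positivity)
      linarith
    have t1l : -(2*(c₁/(n:ℝ))) ≤ (u - Q*γ)*(1+ρ) := by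
      have e1 : 2*(u - Q*γ) ≤ (1+ρ)*(u - Q*γ) :=
        mul_le_mul_of_nonpos_right (by linarith) (by linarith)
      have e2 : 2*(-(c₁/(n:ℝ))) ≤ 2*(u - Q*γ) := by linarith
      linarith [e1, e2]
    have t2u : Q*γ*(1-ρ) ≤ Q*γ*(Q*γ/(n:ℝ)) :=
      mul_le_mul_of_nonneg_left h1ρn (by positivity)
    have t2l : 0 ≤ Q*γ*(1-ρ) := by positivity
    have t3u : 2*(1-ρ)*(1-P) ≤ 2*(Q*γ/(n:ℝ)) := by
      have e1 : (1-ρ)*(1-P) ≤ (1-ρ)*1 :=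
        mul_le_mul_of_nonneg_left (by linarith) h1ρ0
      have e2 : (1-ρ)*1 ≤ Q*γ/(n:ℝ) := by linarith
      linarith
    have t3l : 0 ≤ 2*(1-ρ)*(1-P) := by
      have := mul_nonneg h1ρ0 (by linarith : (0:ℝ) ≤ 1-P)
      linarith
    rw [hid]
    have hQQ : Q*γ*(Q*γ/(n:ℝ)) = Q^2*γ^2/(n:ℝ) := by ring
    rw [abs_le]
    constructor
    · rw [hc₃]
      have : (2*c₁ + Q^2*γ^2 + 2*Q*γ + 2*c₂)/(n:ℝ)
          = 2*(c₁/(n:ℝ)) + Q^2*γ^2/(n:ℝ) + 2*(Q*γ/(n:ℝ)) + 2*(c₂/(n:ℝ)) := by ring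
      rw [this]
      linarith [hPm.1, hPm.2, t1u, t2l, t3u]
    · rw [hc₃]
      have : (2*c₁ + Q^2*γ^2 + 2*Q*γ + 2*c₂)/(n:ℝ)
          = 2*(c₁/(n:ℝ)) + Q^2*γ^2/(n:ℝ) + 2*(Q*γ/(n:ℝ)) + 2*(c₂/(n:ℝ)) := by ring
      rw [this]
      linarith [hPm.1, hPm.2, t1l, t2u, t3l]
  have hDlb : E ≤ D := by
    have := abs_le.1 hDE
    linarith [this.1, hnc₃]
  have hD0 : 0 < D := lt_of_lt_of_le hE hDlb
  -- numerator bound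
  have hw1 : 1 ≤ w := by rw [hwdef]; linarith
  have hw2 : w ≤ 2 := by rw [hwdef]; linarith
  have hwq : |w^q - 2^q| ≤ Q*2^q*γ/(n:ℝ) := by
    have h1 : w^q ≤ 2^q := pow_le_pow_left₀ (by linarith) hw2 q
    have h2 := powLip w 2 (by linarith) hw2 le_rfl q
    rw [abs_of_nonpos (by linarith)]
    have h3 : 2 - w = x := by rw [hwdef]; ring
    rw [h3] at h2
    have : Q*2^q*x ≤ Q*2^q*γ/(n:ℝ) := le_of_eq (by rw [hxdef]; ring)
    rw [← hQdef] at h2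
    linarith
  have hu2 : |u^2 - (Q*γ)^2| ≤ 2*(Q*γ)*c₁/(n:ℝ) := by
    have h1 : u^2 - (Q*γ)^2 = (u + Q*γ)*(u - Q*γ) := by ring
    rw [h1, abs_mul]
    have h2 : |u + Q*γ| ≤ 2*(Q*γ) := by
      rw [abs_of_nonneg (by positivity)]; linarith
    have h3 : |u - Q*γ| ≤ c₁/(n:ℝ) := abs_le.2 ⟨by linarith, by linarith⟩
    calc |u + Q*γ| * |u - Q*γ| ≤ 2*(Q*γ) * (c₁/(n:ℝ)) := by
          exact mul_le_mul h2 h3 (abs_nonneg _) (by positivity)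
    _ = 2*(Q*γ)*c₁/(n:ℝ) := by ring
  have hnum : |w^q*u^2 - 2^q*Q^2*γ^2| ≤ c₄/(n:ℝ) := by
    have hid2 : w^q*u^2 - 2^q*Q^2*γ^2 = (w^q - 2^q)*u^2 + 2^q*(u^2 - (Q*γ)^2) := by ring
    rw [hid2]
    calc |(w^q - 2^q)*u^2 + 2^q*(u^2 - (Q*γ)^2)|
        ≤ |(w^q - 2^q)*u^2| + |2^q*(u^2 - (Q*γ)^2)| := abs_add_le _ _
    _ = |w^q - 2^q| * u^2 + 2^q * |u^2 - (Q*γ)^2| := by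
        rw [abs_mul, abs_mul, abs_of_nonneg (by positivity : (0:ℝ) ≤ u^2),
          abs_of_nonneg h2q.le]
    _ ≤ (Q*2^q*γ/(n:ℝ))*(Q*γ)^2 + 2^q*(2*(Q*γ)*c₁/(n:ℝ)) := by
        have hu2' : u^2 ≤ (Q*γ)^2 := pow_le_pow_left₀ hu0 hu_ub 2
        have e1 : |w^q - 2^q| * u^2 ≤ (Q*2^q*γ/(n:ℝ))*(Q*γ)^2 :=
          mul_le_mul hwq hu2' (sq_nonneg u) (by positivity)
        have e2 : 2^q * |u^2 - (Q*γ)^2| ≤ 2^q*(2*(Q*γ)*c₁/(n:ℝ)) :=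
          mul_le_mul_of_nonneg_left hu2 h2q.le
        linarith [e1, e2]
    _ = c₄/(n:ℝ) := by rw [hc₄]; ring
  -- F - L bound
  have hFL : |F - L| ≤ C₅/(n:ℝ) := by
    have hFLid : F - L = γ^q * ((2*E)*(w^q*u^2) - (2^q*Q^2*γ^2)*D) /
        (((q.factorial : ℝ) * D) * ((q.factorial : ℝ) * (2*E))) * (q.factorial : ℝ) := by
      rw [hFdef, hLdef]
      field_simp
    have hnum2 : |(2*E)*(w^q*u^2) - (2^q*Q^2*γ^2)*D| ≤ c₅/(n:ℝ) := by
      have hid3 : (2*E)*(w^q*u^2) - (2^q*Q^2*γ^2)*D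
          = (2*E)*(w^q*u^2 - 2^q*Q^2*γ^2) + (2^q*Q^2*γ^2)*(2*E - D) := by ring
      rw [hid3]
      calc |(2*E)*(w^q*u^2 - 2^q*Q^2*γ^2) + (2^q*Q^2*γ^2)*(2*E - D)|
          ≤ |(2*E)*(w^q*u^2 - 2^q*Q^2*γ^2)| + |(2^q*Q^2*γ^2)*(2*E - D)| := abs_add_le _ _
      _ = (2*E)*|w^q*u^2 - 2^q*Q^2*γ^2| + (2^q*Q^2*γ^2)*|D - 2*E| := by
          rw [abs_mul (2*E), abs_mul (2^q*Q^2*γ^2), abs_sub_comm (2*E) D,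
            abs_of_nonneg (by positivity : (0:ℝ) ≤ 2*E),
            abs_of_nonneg (by positivity : (0:ℝ) ≤ 2^q*Q^2*γ^2)]
      _ ≤ (2*E)*(c₄/(n:ℝ)) + (2^q*Q^2*γ^2)*(c₃/(n:ℝ)) := by
          have := mul_le_mul_of_nonneg_left hnum (by positivity : (0:ℝ) ≤ 2*E)
          have := mul_le_mul_of_nonneg_left hDE (by positivity : (0:ℝ) ≤ 2^q*Q^2*γ^2)
          linarith
      _ = c₅/(n:ℝ) := by rw [hc₅]; ring
    rw [hFLid, abs_mul, abs_div, abs_mul]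
    rw [abs_of_nonneg (by positivity : (0:ℝ) ≤ γ^q),
      abs_of_nonneg (by positivity : (0:ℝ) ≤ ((q.factorial:ℝ)*D) * ((q.factorial:ℝ)*(2*E))),
      abs_of_nonneg hfac.le]
    have hden : ((q.factorial:ℝ)*E) * ((q.factorial:ℝ)*(2*E)) ≤ ((q.factorial:ℝ)*D) * ((q.factorial:ℝ)*(2*E)) := by
      have e1 : (q.factorial:ℝ)*E ≤ (q.factorial:ℝ)*D :=
        mul_le_mul_of_nonneg_left hDlb hfac.le
      exact mul_le_mul_of_nonneg_right e1 (by positivity)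
    have hstep : γ^q * |(2*E)*(w^q*u^2) - (2^q*Q^2*γ^2)*D| /
          (((q.factorial:ℝ)*D) * ((q.factorial:ℝ)*(2*E))) * (q.factorial:ℝ)
        ≤ γ^q * (c₅/(n:ℝ)) / (((q.factorial:ℝ)*E) * ((q.factorial:ℝ)*(2*E))) * (q.factorial:ℝ) := by
      apply mul_le_mul_of_nonneg_right _ hfac.le
      exact div_le_div₀ (by positivity)
        (mul_le_mul_of_nonneg_left hnum2 (by positivity)) (by positivity) hden
    have hfin : γ^q * (c₅/(n:ℝ)) / (((q.factorial:ℝ)*E) * ((q.factorial:ℝ)*(2*E))) * (q.factorial:ℝ)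
        = C₅/(n:ℝ) := by
      rw [hC₅]
      field_simp
    exact le_trans hstep (le_of_eq hfin)
  -- conclude
  have hK := Kqn_eq_sqrt q hq γ hγ0 hγ1 n hn1
  have hKq := Kq_eq q hq γ hγ0
  rw [← hxdef, ← hρdef, ← hPdef, ← hwdef, ← hudef, ← hDdef, ← hFdef] at hK
  rw [← hQdef, ← heγdef, ← hEdef, ← hLdef] at hKq
  rw [hK, hKq]
  have hF0 : 0 ≤ F := by rw [hFdef]; positivity
  calc |Real.sqrt F - Real.sqrt L| ≤ |F - L| / Real.sqrt L := sqrtDiff F L hF0 hL0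
  _ ≤ (C₅/(n:ℝ)) / Real.sqrt L := by gcongr
  _ = C₅ / Real.sqrt L / (n:ℝ) := by ring

/-- At the phase transition `β = 1`, `K_{q,n} → K_q^{(γ)}`, with rate
`|K_{q,n} − K_q^{(γ)}| ≤ C/n`. -/
theorem stmt_19 (q : ℕ) (hq : 1 ≤ q) (γ : ℝ) (hγ : γ ∈ Set.Ioo (0:ℝ) 1) :
    Filter.Tendsto (fun n : ℕ => Kqn γ q n) Filter.atTop (nhds (Kq γ q)) ∧
    ∃ C > (0:ℝ), ∀ n : ℕ, 1 ≤ n → |Kqn γ q n - Kq γ q| ≤ C / n := by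
  obtain ⟨hγ0, hγ1⟩ := hγ
  obtain ⟨Cb, hCb0, N, hN1, hmain⟩ := main_est q hq γ hγ0 hγ1
  set Csum : ℝ := ∑ m ∈ Finset.Icc 1 N, (m:ℝ) * |Kqn γ q m - Kq γ q| with hCs
  have hCs0 : 0 ≤ Csum :=
    Finset.sum_nonneg fun m _ => mul_nonneg (Nat.cast_nonneg m) (abs_nonneg _)
  have hbound : ∀ n : ℕ, 1 ≤ n → |Kqn γ q n - Kq γ q| ≤ (Cb + Csum) / n := by
    intro n hn
    have hn0 : (0:ℝ) < n := by exact_mod_cast hn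
    rcases le_or_gt N n with h | h
    · calc |Kqn γ q n - Kq γ q| ≤ Cb / n := hmain n h
      _ ≤ (Cb + Csum) / n := (div_le_div_iff_of_pos_right hn0).mpr (by linarith)
    · have hmem : n ∈ Finset.Icc 1 N := Finset.mem_Icc.2 ⟨hn, by omega⟩
      have hterm : (n:ℝ) * |Kqn γ q n - Kq γ q| ≤ Csum := by
        rw [hCs]
        exact Finset.single_le_sum
          (f := fun (m : ℕ) => (m:ℝ) * |Kqn γ q m - Kq γ q|)
          (fun (m : ℕ) (_ : m ∈ Finset.Icc 1 N) =>
            mul_nonneg (by positivity : (0:ℝ) ≤ (m:ℝ)) (abs_nonneg _)) hmem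
      rw [le_div_iff₀ hn0]
      calc |Kqn γ q n - Kq γ q| * (n:ℝ) = (n:ℝ) * |Kqn γ q n - Kq γ q| := by ring
      _ ≤ Csum := hterm
      _ ≤ Cb + Csum := by linarith
  constructor
  · have h0 : Filter.Tendsto (fun n : ℕ => (Cb + Csum)/(n:ℝ)) Filter.atTop (nhds 0) :=
      tendsto_const_div_atTop_nhds_zero_nat _
    have hsq : Filter.Tendsto (fun n : ℕ => Kqn γ q n - Kq γ q) Filter.atTop (nhds 0) := by
      apply squeeze_zero_norm' _ h0
      refine Filter.eventually_atTop.2 ⟨1, fun n hn => ?_⟩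
      rw [Real.norm_eq_abs]
      exact hbound n hn
    exact tendsto_sub_nhds_zero_iff.mp hsq
  · exact ⟨Cb + Csum, by linarith, hbound⟩
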